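/- Let k ≥ 1, let p < q be odd primes, let n = 2^k·p·q, M = 2^{k+1} - 1, and a = σ(n) - 2n. If 0 < a ≤ M, then n is pseudoperfect. -/

import Mathlib

/-- Sum of the positive divisors of `n`. -/
def sigma' (n : ℕ) : ℕ := ∑ d ∈ n.divisors, d

/-- `n` is abundant if `σ(n) > 2n`. -/
def Abundant (n : ℕ) : Prop := 2 * n < sigma' n

/-- `n` is pseudoperfect (in the weak sense) if some subset of its proper divisors sums to `n`. -/
def Pseudoperfect (n : ℕ) : Prop := ∃ s ⊆ n.properDivisors, ∑ d ∈ s, d = n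

/-- `n` is weird if it is abundant and no subset of its proper divisors sums to `n`. -/
def Weird (n : ℕ) : Prop := Abundant n ∧ ¬ Pseudoperfect n

lemma exists_binary_rep (m : ℕ) : ∀ a < 2 ^ m, ∃ s ⊆ Finset.range m, ∑ i ∈ s, 2 ^ i = a := by
  induction m with
  | zero => intro a ha; interval_cases a; exact ⟨∅, by simp, by simp⟩
  | succ m ih =>
    intro a ha
    by_cases h : a < 2 ^ m
    · obtain ⟨s, hs, hsum⟩ := ih a h
      exact ⟨s, hs.trans (Finset.range_subset_range.2 (Nat.le_succ m)), hsum⟩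
    · push_neg at h
      obtain ⟨s, hs, hsum⟩ := ih (a - 2 ^ m) (by rw [pow_succ] at ha; omega)
      have hm : m ∉ s := fun hmem => by simpa using hs hmem
      refine ⟨insert m s, ?_, ?_⟩
      · intro x hx
        rcases Finset.mem_insert.1 hx with rfl | hx
        · exact Finset.self_mem_range_succ x
        · exact Finset.range_subset_range.2 (Nat.le_succ m) (hs hx)
      · rw [Finset.sum_insert hm, hsum]; omega

theorem pseudoperfect_of_small_abundance (k p q : ℕ) (hk : 1 ≤ k) (hp : p.Prime)
    (hq : q.Prime) (hop : Odd p) (hoq : Odd q) (hpq : p < q)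
    (ha : 0 < (sigma' (2 ^ k * p * q) : ℤ) - 2 * (2 ^ k * p * q))
    (haM : (sigma' (2 ^ k * p * q) : ℤ) - 2 * (2 ^ k * p * q) ≤ 2 ^ (k + 1) - 1) :
    Pseudoperfect (2 ^ k * p * q) := by
  set n := 2 ^ k * p * q with hn
  have hp2 : 2 ≤ p := hp.two_le
  have hq2 : 2 ≤ q := hq.two_le
  have hpow : 0 < 2 ^ k := Nat.pow_pos (n := k) (by norm_num)
  have hnpos : 0 < n := by positivity
  have h2n : 2 * n < sigma' n := by
    have h2 : ((2 * n : ℕ) : ℤ) < (sigma' n : ℤ) := by push_cast [hn]; linarith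
    exact_mod_cast h2
  set a := sigma' n - 2 * n with haa
  have hσ : sigma' n = 2 * n + a := by omega
  have halt : a < 2 ^ (k + 1) := by
    have h1 : (a : ℤ) = (sigma' n : ℤ) - 2 * n := by push_cast; omega
    have h2 : (a : ℤ) ≤ 2 ^ (k + 1) - 1 := by rw [h1]; exact_mod_cast haM
    have h3 : (a : ℤ) < (2 : ℤ) ^ (k + 1) := by linarith
    exact_mod_cast h3
  obtain ⟨s, hs, hsum⟩ := exists_binary_rep (k + 1) a halt
  set T := s.image (2 ^ ·) with hT
  have hinj : Function.Injective (2 ^ · : ℕ → ℕ) := Nat.pow_right_injective (le_refl 2)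
  have hTsum : ∑ d ∈ T, d = a := by
    rw [hT, Finset.sum_image (fun x _ y _ h => hinj h)]; exact hsum
  have hTsub : T ⊆ n.properDivisors := by
    intro x hx
    obtain ⟨i, hi, rfl⟩ := Finset.mem_image.1 hx
    have hik : i ≤ k := by have := hs hi; simp [Finset.mem_range] at this; omega
    rw [Nat.mem_properDivisors]
    constructor
    · exact Dvd.dvd.mul_right (Dvd.dvd.mul_right (pow_dvd_pow 2 hik) p) q
    · calc 2 ^ i ≤ 2 ^ k := Nat.pow_le_pow_right (by norm_num) hik
        _ = 2 ^ k * 1 * 1 := by ring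
        _ < 2 ^ k * p * q := by
            apply Nat.mul_lt_mul_of_lt_of_le
            · exact Nat.mul_lt_mul_of_le_of_lt (le_refl _) (by omega) hpow
            · omega
            · omega
  have hpropsum : ∑ d ∈ n.properDivisors, d = n + a := by
    have hins := Nat.insert_self_properDivisors hnpos.ne'
    have hnotmem : n ∉ n.properDivisors := fun h => by
      simpa using (Nat.mem_properDivisors.1 h).2
    have : sigma' n = n + ∑ d ∈ n.properDivisors, d := by
      rw [sigma', ← hins, Finset.sum_insert hnotmem]
    omega
  refine ⟨n.properDivisors \ T, Finset.sdiff_subset, ?_⟩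
  have hsd := Finset.sum_sdiff (f := id) hTsub
  simp only [id] at hsd
  omega
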